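/- With $A = F - |z_1|^2 - \cdots - |z_{n-1}|^2 > 0$, $x = |z_0|^2$, $B = F'^2 x - F(F' + F'' x) \neq 0$, define the $n \times n$ matrices $h$ (as in the Hartogs metric: $h_{00} = C/A^2$ with $C = F'^2 x - (F''x + F')A$, $h_{0\beta} = -F'\bar z_0 z_\beta/A^2$, $h_{\alpha 0} = -F' z_0 \bar z_\alpha / A^2$, $h_{\alpha\beta} = (\delta_{\alpha\beta}A + \bar z_\alpha z_\beta)/A^2$ for $\alpha,\beta \ge 1$) and $G$ with entries $G^{00} = \frac{A}{B}F$, $G^{\beta 0} = \frac{A}{B}F' z_0 \bar z_\beta$, $G^{0\alpha} = \frac{A}{B}F' \bar z_0 z_\alpha$, $G^{\beta\alpha} = \frac{A}{B}(F' + F''x) z_\alpha \bar z_\beta$ for $\alpha \neq \beta$, $G^{\beta\beta} = \frac{A}{B}[B + (F' + F''x)|z_\beta|^2]$ ($\alpha,\beta \ge 1$). Then $G$ is the inverse matrix of $h$. -/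

import Mathlib

set_option maxHeartbeats 1600000 in
/-- the matrix `G` with entries `g^{βᾱ}` (eqs. (11)-(14) of the
paper) is the inverse of the complex Hessian `h` of the Hartogs potential:
`G · h = 1`, whenever `A = F - Σ|z_k|² > 0` and `B = F'²x - F(F'+F''x) ≠ 0`. -/
theorem stmt_7 (n : ℕ) [NeZero n] (F F' F'' A B C : ℝ) (z : Fin n → ℂ)
    (hA : A = F - ∑ k ∈ Finset.univ.erase 0, Complex.normSq (z k)) (hApos : 0 < A)
    (hB : B = F' ^ 2 * Complex.normSq (z 0) - F * (F' + F'' * Complex.normSq (z 0)))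
    (hB0 : B ≠ 0)
    (hC : C = F' ^ 2 * Complex.normSq (z 0) - (F'' * Complex.normSq (z 0) + F') * A) :
    (Matrix.of fun β α : Fin n =>
        if β = 0 then
          (if α = 0 then ((A / B * F : ℝ) : ℂ)
           else ((A / B * F' : ℝ) : ℂ) * (starRingEnd ℂ) (z 0) * z α)
        else if α = 0 then ((A / B * F' : ℝ) : ℂ) * z 0 * (starRingEnd ℂ) (z β)
        else if β = α then
          ((A / B : ℝ) : ℂ) *
            ((B : ℂ) + ((F' + F'' * Complex.normSq (z 0) : ℝ) : ℂ) * (Complex.normSq (z β) : ℂ))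
        else ((A / B * (F' + F'' * Complex.normSq (z 0)) : ℝ) : ℂ) * z α * (starRingEnd ℂ) (z β)) *
      (Matrix.of fun a b : Fin n =>
        if a = 0 then
          (if b = 0 then (C : ℂ) / (A : ℂ) ^ 2
           else -(F' : ℂ) * (starRingEnd ℂ) (z 0) * z b / (A : ℂ) ^ 2)
        else if b = 0 then -(F' : ℂ) * z 0 * (starRingEnd ℂ) (z a) / (A : ℂ) ^ 2
        else ((if a = b then (A : ℂ) else 0) + (starRingEnd ℂ) (z a) * z b) / (A : ℂ) ^ 2)
      = 1 := by
  have hA0 : (A:ℂ) ≠ 0 := by exact_mod_cast hApos.ne'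
  have hBc : (B:ℂ) ≠ 0 := by exact_mod_cast hB0
  have hcm : ∀ w : ℂ, (starRingEnd ℂ) w * w = (Complex.normSq w : ℂ) := fun w => by
    rw [mul_comm, Complex.mul_conj]
  have hBr : (B:ℂ) = (F':ℂ)^2 * (Complex.normSq (z 0):ℂ) -
      (F:ℂ) * ((F':ℂ) + (F'':ℂ) * (Complex.normSq (z 0):ℂ)) := by exact_mod_cast hB
  have hCr : (C:ℂ) = (F':ℂ)^2 * (Complex.normSq (z 0):ℂ) -
      ((F'':ℂ) * (Complex.normSq (z 0):ℂ) + (F':ℂ)) * (A:ℂ) := by exact_mod_cast hC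
  have hBne : (F':ℂ)^2 * (Complex.normSq (z 0):ℂ) -
      (F:ℂ) * ((F':ℂ) + (F'':ℂ) * (Complex.normSq (z 0):ℂ)) ≠ 0 := hBr ▸ hBc
  have hBne2 : (F':ℂ)^2 * ((starRingEnd ℂ) (z 0) * z 0) -
      (F:ℂ) * ((F':ℂ) + (F'':ℂ) * ((starRingEnd ℂ) (z 0) * z 0)) ≠ 0 := by
    rw [hcm]; exact hBne
  have hS : ∑ b ∈ Finset.univ.erase (0 : Fin n), ((starRingEnd ℂ) (z b) * z b)
      = ((F - A : ℝ) : ℂ) := by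
    simp_rw [hcm]
    rw [← Complex.ofReal_sum]
    norm_cast
    rw [hA]; ring
  ext i j
  rw [Matrix.mul_apply]
  rw [← Finset.add_sum_erase Finset.univ _ (Finset.mem_univ 0)]
  by_cases hi : i = 0 <;> by_cases hj : j = 0 <;>
    simp only [Matrix.of_apply, Matrix.one_apply, hi, hj, if_pos rfl, if_true, if_false]
  · -- i = 0, j = 0
    rw [Finset.sum_congr rfl (fun b hb => show _ =
        (((A / B * F' : ℝ) : ℂ) * (-(F' : ℂ)) * ((starRingEnd ℂ) (z 0) * z 0) / (A:ℂ)^2) *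
          ((starRingEnd ℂ) (z b) * z b) from by
      rw [if_neg (Finset.mem_erase.mp hb).1, if_neg (Finset.mem_erase.mp hb).1]; ring)]
    rw [← Finset.mul_sum, hS, hcm (z 0)]
    push_cast
    rw [hCr, hBr]
    field_simp
    have hD : (-((F:ℂ) * (F':ℂ)) - (F:ℂ) * (Complex.normSq (z 0):ℂ) * (F'':ℂ) +
        (F':ℂ) ^ 2 * (Complex.normSq (z 0):ℂ)) ≠ 0 := by
      intro h; apply hBne; linear_combination h
    linear_combination (A:ℂ) * mul_inv_cancel₀ hD
  · -- i = 0, j ≠ 0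
    rw [Finset.sum_congr rfl (fun b hb => show _ =
        (((A / B * F' : ℝ) : ℂ) * (starRingEnd ℂ) (z 0) * z j / (A:ℂ)^2) *
            ((starRingEnd ℂ) (z b) * z b) +
          (if b = j then ((A / B * F' : ℝ) : ℂ) * (starRingEnd ℂ) (z 0) * z j * (A:ℂ) / (A:ℂ)^2
           else 0) from by
      rw [if_neg (Finset.mem_erase.mp hb).1, if_neg (Finset.mem_erase.mp hb).1]
      by_cases hbj : b = j
      · subst hbj; rw [if_pos rfl, if_pos rfl]; ring
      · rw [if_neg hbj, if_neg hbj]; ring)]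
    rw [Finset.sum_add_distrib, ← Finset.mul_sum, hS, Finset.sum_ite_eq',
      if_pos (Finset.mem_erase.mpr ⟨hj, Finset.mem_univ j⟩),
      if_neg (fun h : (0:Fin n) = j => hj h.symm)]
    push_cast
    rw [hBr]
    field_simp
    ring
  · -- i ≠ 0, j = 0
    rw [Finset.sum_congr rfl (fun b hb => show _ =
        (((A / B * (F' + F'' * Complex.normSq (z 0)) : ℝ) : ℂ) * (starRingEnd ℂ) (z i) *
              (-(F':ℂ)) * z 0 / (A:ℂ)^2) * ((starRingEnd ℂ) (z b) * z b) +
          (if b = i then ((A / B : ℝ) : ℂ) * (B:ℂ) * (-(F':ℂ)) * z 0 * (starRingEnd ℂ) (z i) / (A:ℂ)^2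
           else 0) from by
      rw [if_neg (Finset.mem_erase.mp hb).1, if_neg (Finset.mem_erase.mp hb).1]
      by_cases hbi : b = i
      · subst hbi; rw [if_pos rfl, if_pos rfl, ← hcm (z b)]; push_cast; ring
      · rw [if_neg (fun h => hbi h.symm), if_neg hbi]; push_cast; ring)]
    rw [Finset.sum_add_distrib, ← Finset.mul_sum, hS, Finset.sum_ite_eq',
      if_pos (Finset.mem_erase.mpr ⟨hi, Finset.mem_univ i⟩)]
    push_cast
    rw [hCr, hBr]
    field_simp
    ring
  · -- i ≠ 0, j ≠ 0
    rw [Finset.sum_congr rfl (fun b hb => show _ =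
        (((A / B * (F' + F'' * Complex.normSq (z 0)) : ℝ) : ℂ) * (starRingEnd ℂ) (z i) * z j /
              (A:ℂ)^2) * ((starRingEnd ℂ) (z b) * z b) +
          (if b = j then ((A / B * (F' + F'' * Complex.normSq (z 0)) : ℝ) : ℂ) * z j *
              (starRingEnd ℂ) (z i) * (A:ℂ) / (A:ℂ)^2 else 0) +
          (if b = i then (A:ℂ) * ((if i = j then (A:ℂ) else 0) + (starRingEnd ℂ) (z i) * z j) /
              (A:ℂ)^2 else 0) from by
      have hb0 := (Finset.mem_erase.mp hb).1
      rw [if_neg hb0, if_neg hb0]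
      by_cases hbi : b = i <;> by_cases hbj : b = j
      · subst hbi; subst hbj
        simp only [if_pos rfl]
        rw [← hcm (z b)]
        push_cast
        field_simp
        ring
      · subst hbi
        simp only [if_pos rfl, if_neg hbj]
        rw [← hcm (z b)]
        push_cast
        field_simp
        ring
      · subst hbj
        simp only [if_pos rfl, if_neg hbi, if_neg (fun h : b = b → False => h rfl),
          if_neg (fun h : i = b => hbi h.symm)]
        push_cast; ring
      · simp only [if_neg hbi, if_neg hbj, if_neg (fun h : i = b => hbi h.symm)]
        push_cast; ring)]
    rw [Finset.sum_add_distrib, Finset.sum_add_distrib, ← Finset.mul_sum, hS,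
      Finset.sum_ite_eq', Finset.sum_ite_eq',
      if_pos (Finset.mem_erase.mpr ⟨hj, Finset.mem_univ j⟩),
      if_pos (Finset.mem_erase.mpr ⟨hi, Finset.mem_univ i⟩)]
    by_cases hij : i = j
    · subst hij
      rw [if_pos rfl, if_pos rfl]
      push_cast
      field_simp
      rw [hBr, (hcm (z 0)).symm]
      ring
    · rw [if_neg hij, if_neg hij]
      push_cast
      field_simp
      rw [hBr, (hcm (z 0)).symm]
      ring
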